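/- Under the stated hypotheses, for all semibasic vector fields U = (U^i), V = (V^i) with smooth components on W, at every point of W where F = 1 (summing over repeated indices): y^k φ_{:k} = ⟨XU, V⟩ + ⟨U, XV⟩ − ⟨(∇_{·U}Y)(y), V⟩, where φ := g_{ij}U^iV^j (so φ_{:k} := φ_{|k} + F Y^j_k φ_{·j} with φ_{|k} := ∂φ/∂x^k − N^p_k ∂φ/∂y^p and φ_{·j} := ∂φ/∂y^j), (XU)^i := y^k U^i_{:k}, ⟨U,V⟩ := g_{ij}U^iV^j, and (∇_{·U}Y)(y)^i := (∂Y^i_k/∂y^j) U^j y^k. -/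

import Mathlib

noncomputable section

/-- A point of the local chart `W ⊆ ℝⁿ × (ℝⁿ ∖ {0})` of `TM ∖ {0}`. -/
abbrev Pt (n : ℕ) := (Fin n → ℝ) × (Fin n → ℝ)

/-- Partial derivative in the `k`-th base (`x`) direction. -/
def pdx {n : ℕ} (k : Fin n) (f : Pt n → ℝ) (z : Pt n) : ℝ :=
  fderiv ℝ f z (Pi.single k 1, 0)

/-- Partial derivative in the `k`-th fibre (`y`) direction. -/
def pdy {n : ℕ} (k : Fin n) (f : Pt n → ℝ) (z : Pt n) : ℝ :=
  fderiv ℝ f z (0, Pi.single k 1)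

/-- The fundamental tensor `g_{ij} = ½ ∂²(F²)/∂y^i∂y^j`. -/
def gF {n : ℕ} (F : Pt n → ℝ) (i j : Fin n) : Pt n → ℝ :=
  fun z => (1 / 2 : ℝ) * pdy i (pdy j (fun w => F w ^ 2)) z

/-- The Cartan tensor `C_{ijk} = ¼ ∂³(F²)/∂y^i∂y^j∂y^k`. -/
def CF {n : ℕ} (F : Pt n → ℝ) (i j k : Fin n) : Pt n → ℝ :=
  fun z => (1 / 4 : ℝ) * pdy i (pdy j (pdy k (fun w => F w ^ 2))) z

/-- `y_k := g_{kj} y^j`. -/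
def ylow {n : ℕ} (F : Pt n → ℝ) (k : Fin n) : Pt n → ℝ :=
  fun z => ∑ j, gF F k j z * z.2 j

/-- `N^i_j := Γ^i_{jk} y^k`. -/
def Nc {n : ℕ} (Γ : Fin n → Fin n → Fin n → Pt n → ℝ) (i j : Fin n) : Pt n → ℝ :=
  fun z => ∑ k, Γ i j k z * z.2 k

/-- Horizontal derivative of a scalar: `u_{|k} := ∂u/∂x^k − N^p_k ∂u/∂y^p`. -/
def dhS {n : ℕ} (Γ : Fin n → Fin n → Fin n → Pt n → ℝ) (k : Fin n) (u : Pt n → ℝ) :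
    Pt n → ℝ :=
  fun z => pdx k u z - ∑ p, Nc Γ p k z * pdy p u z

/-- The Chern curvature contraction `P^i_{lk} := −y^j ∂Γ^i_{jl}/∂y^k`. -/
def Pc {n : ℕ} (Γ : Fin n → Fin n → Fin n → Pt n → ℝ) (i l k : Fin n) : Pt n → ℝ :=
  fun z => -∑ j, z.2 j * pdy k (Γ i j l) z

/-- The Riemann curvature tensor `R^i_{jkl}` of the connection. -/
def Rfull {n : ℕ} (Γ : Fin n → Fin n → Fin n → Pt n → ℝ) (i j k l : Fin n) :
    Pt n → ℝ :=
  fun z => pdx k (Γ i j l) z - pdx l (Γ i j k) z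
    + (∑ m, pdy m (Γ i j k) z * Nc Γ m l z)
    - (∑ m, pdy m (Γ i j l) z * Nc Γ m k z)
    + (∑ m, Γ m j l z * Γ i m k z) - ∑ m, Γ m j k z * Γ i m l z

/-- `R^i_{kl} := y^j R^i_{jkl}`. -/
def Rc {n : ℕ} (Γ : Fin n → Fin n → Fin n → Pt n → ℝ) (i k l : Fin n) : Pt n → ℝ :=
  fun z => ∑ j, z.2 j * Rfull Γ i j k l z

/-- The Lorentz force `Y^i_j := Ω_{jk} g^{ik}` (with `Ω` a function of `x` only). -/
def Yl {n : ℕ} (Ω : Fin n → Fin n → (Fin n → ℝ) → ℝ)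
    (ginv : Fin n → Fin n → Pt n → ℝ) (i j : Fin n) : Pt n → ℝ :=
  fun z => ∑ k, Ω j k z.1 * ginv i k z

/-- Magnetic derivative of a scalar: `u_{:k} := u_{|k} + F Y^j_k u_{·j}`. -/
def dmS {n : ℕ} (F : Pt n → ℝ) (Γ : Fin n → Fin n → Fin n → Pt n → ℝ)
    (Ω : Fin n → Fin n → (Fin n → ℝ) → ℝ) (ginv : Fin n → Fin n → Pt n → ℝ)
    (k : Fin n) (u : Pt n → ℝ) : Pt n → ℝ :=
  fun z => dhS Γ k u z + F z * ∑ j, Yl Ω ginv j k z * pdy j u z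

/-- Horizontal covariant derivative of the Lorentz force:
`Y^i_{j|k} := ∂Y^i_j/∂x^k − N^p_k ∂Y^i_j/∂y^p + Γ^i_{kp} Y^p_j − Γ^p_{kj} Y^i_p`. -/
def Ydh {n : ℕ} (Γ : Fin n → Fin n → Fin n → Pt n → ℝ)
    (Ω : Fin n → Fin n → (Fin n → ℝ) → ℝ) (ginv : Fin n → Fin n → Pt n → ℝ)
    (i j k : Fin n) : Pt n → ℝ :=
  fun z => pdx k (Yl Ω ginv i j) z - (∑ p, Nc Γ p k z * pdy p (Yl Ω ginv i j) z)
    + (∑ p, Γ i k p z * Yl Ω ginv p j z) - ∑ p, Γ p k j z * Yl Ω ginv i p z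

/-- The twisted curvature `R̃^i_{lk}` of the magnetic flow. -/
def Rt {n : ℕ} (F : Pt n → ℝ) (Γ : Fin n → Fin n → Fin n → Pt n → ℝ)
    (Ω : Fin n → Fin n → (Fin n → ℝ) → ℝ) (ginv : Fin n → Fin n → Pt n → ℝ)
    (i l k : Fin n) : Pt n → ℝ :=
  fun z => Rc Γ i l k z
    + (Ydh Γ Ω ginv i l k z - Ydh Γ Ω ginv i k l z)
    - ((∑ m, Pc Γ i l m z * Yl Ω ginv m k z) - ∑ m, Pc Γ i k m z * Yl Ω ginv m l z)
    + ((∑ j, Yl Ω ginv j l z * pdy j (Yl Ω ginv i k) z)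
        - ∑ j, Yl Ω ginv j k z * pdy j (Yl Ω ginv i l) z)
    + ∑ s, ylow F s z * (Yl Ω ginv s k z * Yl Ω ginv i l z
        - Yl Ω ginv s l z * Yl Ω ginv i k z)

/-- `∇^·u := (g^{ij} u_{·j})`. -/
def nablaV {n : ℕ} (ginv : Fin n → Fin n → Pt n → ℝ) (u : Pt n → ℝ) (i : Fin n) :
    Pt n → ℝ :=
  fun z => ∑ j, ginv i j z * pdy j u z

/-- `∇^:u := (g^{ij} u_{:j})`. -/
def nablaM {n : ℕ} (F : Pt n → ℝ) (Γ : Fin n → Fin n → Fin n → Pt n → ℝ)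
    (Ω : Fin n → Fin n → (Fin n → ℝ) → ℝ) (ginv : Fin n → Fin n → Pt n → ℝ)
    (u : Pt n → ℝ) (i : Fin n) : Pt n → ℝ :=
  fun z => ∑ j, ginv i j z * dmS F Γ Ω ginv j u z

/-- The generator applied to a scalar: `Xu := y^k u_{:k}`. -/
def Xs {n : ℕ} (F : Pt n → ℝ) (Γ : Fin n → Fin n → Fin n → Pt n → ℝ)
    (Ω : Fin n → Fin n → (Fin n → ℝ) → ℝ) (ginv : Fin n → Fin n → Pt n → ℝ)
    (u : Pt n → ℝ) : Pt n → ℝ :=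
  fun z => ∑ k, z.2 k * dmS F Γ Ω ginv k u z

/-- `⟨U,V⟩ := g_{ij} U^i V^j`. -/
def iprod {n : ℕ} (F : Pt n → ℝ) (U V : Fin n → Pt n → ℝ) : Pt n → ℝ :=
  fun z => ∑ i, ∑ j, gF F i j z * U i z * V j z

/-- Magnetic derivative of a semibasic vector field:
`U^i_{:k} := U^i_{|k} + F Y^j_k U^i_{·j}`. -/
def dmVec {n : ℕ} (F : Pt n → ℝ) (Γ : Fin n → Fin n → Fin n → Pt n → ℝ)
    (Ω : Fin n → Fin n → (Fin n → ℝ) → ℝ) (ginv : Fin n → Fin n → Pt n → ℝ)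
    (k : Fin n) (U : Fin n → Pt n → ℝ) (i : Fin n) : Pt n → ℝ :=
  fun z => pdx k (U i) z - (∑ p, Nc Γ p k z * pdy p (U i) z)
    + (∑ p, Γ i k p z * U p z)
    + F z * ∑ j, Yl Ω ginv j k z * pdy j (U i) z

/-- The generator applied to a semibasic vector field: `(XV)^i := y^k V^i_{:k}`. -/
def XVec {n : ℕ} (F : Pt n → ℝ) (Γ : Fin n → Fin n → Fin n → Pt n → ℝ)
    (Ω : Fin n → Fin n → (Fin n → ℝ) → ℝ) (ginv : Fin n → Fin n → Pt n → ℝ)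
    (V : Fin n → Pt n → ℝ) (i : Fin n) : Pt n → ℝ :=
  fun z => ∑ k, z.2 k * dmVec F Γ Ω ginv k V i z

/-- The Lorentz force applied to `y`: `Y(y)^i := Y^i_j y^j`. -/
def Yy {n : ℕ} (Ω : Fin n → Fin n → (Fin n → ℝ) → ℝ)
    (ginv : Fin n → Fin n → Pt n → ℝ) (i : Fin n) : Pt n → ℝ :=
  fun z => ∑ j, Yl Ω ginv i j z * z.2 j


/-! ### Auxiliary lemmas -/

section AuxLemmas

variable {n : ℕ} {W : Set (Pt n)} {z : Pt n}

theorem aux_smOn_pd (hW : IsOpen W) {f : Pt n → ℝ} (hf : ContDiffOn ℝ (⊤:ℕ∞) f W) (v : Pt n) :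
    ContDiffOn ℝ (⊤:ℕ∞) (fun w => fderiv ℝ f w v) W := by
  have h1 : ContDiffOn ℝ (⊤:ℕ∞) (fderiv ℝ f) W := hf.fderiv_of_isOpen hW (by simp)
  exact (ContinuousLinearMap.apply ℝ ℝ v).contDiff.comp_contDiffOn h1

theorem aux_pd_pd_comm {f : Pt n → ℝ} (hf : ContDiffAt ℝ (⊤:ℕ∞) f z) (va vb : Pt n) :
    fderiv ℝ (fun w => fderiv ℝ f w vb) z va = fderiv ℝ (fun w => fderiv ℝ f w va) z vb := by
  have hsymm : IsSymmSndFDerivAt ℝ f z := hf.isSymmSndFDerivAt (by rw [minSmoothness_of_isRCLikeNormedField]; exact WithTop.coe_le_coe.mpr le_top)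
  have hD : DifferentiableAt ℝ (fderiv ℝ f) z := by
    have := hf.fderiv_right (m := (1:ℕ∞)) (by norm_cast)
    exact this.differentiableAt (by norm_cast)
  have key : ∀ v : Pt n, fderiv ℝ (fun w => fderiv ℝ f w v) z
      = (ContinuousLinearMap.apply ℝ ℝ v).comp (fderiv ℝ (fderiv ℝ f) z) := by
    intro v
    exact ((ContinuousLinearMap.apply ℝ ℝ v).hasFDerivAt.comp z hD.hasFDerivAt).fderiv
  rw [key, key]
  simpa using hsymm va vb

theorem aux_pd_sum {ι : Type*} (s : Finset ι) {f : ι → Pt n → ℝ}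
    (hf : ∀ i ∈ s, DifferentiableAt ℝ (f i) z) (v : Pt n) :
    fderiv ℝ (fun w => ∑ i ∈ s, f i w) z v = ∑ i ∈ s, fderiv ℝ (f i) z v := by
  rw [fderiv_fun_sum hf]; simp

theorem aux_pd_mul {f g : Pt n → ℝ} (hf : DifferentiableAt ℝ f z) (hg : DifferentiableAt ℝ g z)
    (v : Pt n) :
    fderiv ℝ (fun w => f w * g w) z v = fderiv ℝ f z v * g z + f z * fderiv ℝ g z v := by
  rw [fderiv_fun_mul hf hg]; simp [mul_comm]; ring

theorem aux_pd_mul3 {f g h : Pt n → ℝ} (hf : DifferentiableAt ℝ f z)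
    (hg : DifferentiableAt ℝ g z) (hh : DifferentiableAt ℝ h z) (v : Pt n) :
    fderiv ℝ (fun w => f w * g w * h w) z v
      = fderiv ℝ f z v * g z * h z + f z * fderiv ℝ g z v * h z + f z * g z * fderiv ℝ h z v := by
  rw [aux_pd_mul (hf.fun_mul hg) hh, aux_pd_mul hf hg]; ring

theorem aux_pd_fst_zero {f : Pt n → ℝ} (hf : DifferentiableAt ℝ f z)
    (hc : ∀ w : Pt n, f w = f (w.1, z.2)) (v : Fin n → ℝ) :
    fderiv ℝ f z (0, v) = 0 := by
  set L : Pt n →L[ℝ] Pt n :=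
    (ContinuousLinearMap.fst ℝ (Fin n → ℝ) (Fin n → ℝ)).prod 0 with hL
  have hg : HasFDerivAt (fun w : Pt n => (w.1, z.2)) L z := by
    have h1 : HasFDerivAt (fun w : Pt n => w.1) (ContinuousLinearMap.fst ℝ _ _) z :=
      hasFDerivAt_fst
    have h2 : HasFDerivAt (fun _ : Pt n => z.2) (0 : Pt n →L[ℝ] (Fin n → ℝ)) z :=
      hasFDerivAt_const _ _
    exact h1.prodMk h2
  have hcomp : HasFDerivAt f ((fderiv ℝ f z).comp L) z := by
    have := (hf.hasFDerivAt.comp z hg : HasFDerivAt (fun w : Pt n => f (w.1, z.2)) _ z)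
    exact this.congr_of_eventuallyEq (Filter.Eventually.of_forall hc)
  rw [hcomp.fderiv]
  simp [hL, Prod.mk_zero_zero]

theorem aux_contDiffOn_det {M : Pt n → Matrix (Fin n) (Fin n) ℝ}
    (hM : ∀ i j, ContDiffOn ℝ (⊤:ℕ∞) (fun w => M w i j) W) :
    ContDiffOn ℝ (⊤:ℕ∞) (fun w => (M w).det) W := by
  simp only [Matrix.det_apply']
  apply ContDiffOn.sum
  intro σ _
  exact ContDiffOn.mul contDiffOn_const
    (fun x hx => contDiffWithinAt_prod (fun i _ => hM (σ i) i x hx))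

theorem aux_ginv_eq_cramer (hW : IsOpen W) {g gi : Fin n → Fin n → Pt n → ℝ}
    (hg : ∀ i j, ContDiffOn ℝ (⊤:ℕ∞) (g i j) W)
    (hright : ∀ z ∈ W, ∀ i j, ∑ k, g i k z * gi k j z = if i = j then (1:ℝ) else 0) :
    ∃ Gi : Fin n → Fin n → Pt n → ℝ,
      (∀ i j, ContDiffOn ℝ (⊤:ℕ∞) (Gi i j) W) ∧ (∀ w ∈ W, ∀ i j, gi i j w = Gi i j w) := by
  classical
  set M : Pt n → Matrix (Fin n) (Fin n) ℝ := fun w => Matrix.of (fun i j => g i j w) with hM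
  have hMinv : ∀ w ∈ W, (M w) * (Matrix.of fun i j => gi i j w) = 1 := by
    intro w hw
    ext i j
    simpa [hM, Matrix.mul_apply, Matrix.one_apply] using hright w hw i j
  have hdet : ∀ w ∈ W, (M w).det ≠ 0 := by
    intro w hw
    have h1 : (M w).det * (Matrix.of fun i j => gi i j w).det = 1 := by
      rw [← Matrix.det_mul, hMinv w hw, Matrix.det_one]
    intro h0; rw [h0, zero_mul] at h1; exact zero_ne_one h1
  refine ⟨fun i j w => ((M w).det)⁻¹ * (M w).adjugate i j, ?_, ?_⟩
  · intro i j
    apply ContDiffOn.mul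
    · exact (aux_contDiffOn_det (fun i j => hg i j)).inv hdet
    · simp only [Matrix.adjugate_apply]
      apply aux_contDiffOn_det
      intro a b
      simp only [Matrix.updateRow_apply]
      by_cases hab : a = j
      · simp only [hab, if_true, if_pos]; exact contDiffOn_const
      · simp only [hab, if_false]; exact hg a b
  · intro w hw i j
    have hinv : (M w)⁻¹ = Matrix.of fun i j => gi i j w := Matrix.inv_eq_right_inv (hMinv w hw)
    have : (M w)⁻¹ i j = gi i j w := by rw [hinv]; rfl
    rw [← this, Matrix.inv_def, Ring.inverse_eq_inv']
    simp

end AuxLemmas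

section GrandAlgebra

variable {ι : Type*} [Fintype ι]

theorem aux_sum_rot3 (f : ι → ι → ι → ℝ) :
    ∑ k, ∑ i, ∑ j, f k i j = ∑ i, ∑ j, ∑ k, f k i j := by
  rw [Finset.sum_comm]
  exact Finset.sum_congr rfl fun i _ => Finset.sum_comm

theorem aux_sum4_eq (f : ι → ι → ι → ι → ℝ) :
    (∑ a, ∑ b, ∑ c, ∑ d, f a b c d)
      = ∑ x : ι × ι × ι × ι, f x.1 x.2.1 x.2.2.1 x.2.2.2 := by
  simp only [Fintype.sum_prod_type]

set_option maxHeartbeats 1000000 in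
theorem aux_grand (g du dv eu ev N Y : ι → ι → ℝ) (dg dY C Γm : ι → ι → ι → ℝ) (u v y : ι → ℝ)
    (hgs : ∀ i j, g i j = g j i)
    (hCs : ∀ a b c, C a b c = C b a c)
    (hΓs : ∀ i a b, Γm i a b = Γm i b a)
    (hcomp : ∀ k i j, dg k i j
      = ∑ m, (g m j * Γm m i k + g m i * Γm m j k + 2 * C i m j * N m k))
    (hyg : ∀ a b j, ∑ i, g i j * dY a i b = -(2 * ∑ i, C a i j * Y i b)) :
    ∑ k, y k * ((∑ i, ∑ j, (dg k i j * u i * v j + g i j * du k i * v j + g i j * u i * dv k j))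
      - (∑ p, N p k * (∑ i, ∑ j,
          (2 * C p i j * u i * v j + g i j * eu p i * v j + g i j * u i * ev p j)))
      + (∑ s, Y s k * (∑ i, ∑ j,
          (2 * C s i j * u i * v j + g i j * eu s i * v j + g i j * u i * ev s j))))
    = (∑ i, ∑ j, g i j * (∑ k, y k * (du k i - (∑ p, N p k * eu p i)
        + (∑ p, Γm i k p * u p) + ∑ s, Y s k * eu s i)) * v j)
    + (∑ i, ∑ j, g i j * u i * (∑ k, y k * (dv k j - (∑ p, N p k * ev p j)
        + (∑ p, Γm j k p * v p) + ∑ s, Y s k * ev s j)))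
    - (∑ i, ∑ j, g i j * (∑ a, ∑ b, dY a i b * u a * y b) * v j) := by
  classical
  have hRT : (∑ i, ∑ j, g i j * (∑ a, ∑ b, dY a i b * u a * y b) * v j)
      = -∑ j, ∑ a, ∑ b, ∑ i, 2 * C a i j * Y i b * (u a * y b * v j) := by
    rw [Finset.sum_comm]
    rw [← Finset.sum_neg_distrib]
    refine Finset.sum_congr rfl fun j _ => ?_
    have h1 : ∀ i, g i j * (∑ a, ∑ b, dY a i b * u a * y b) * v j
        = ∑ a, ∑ b, g i j * dY a i b * (u a * y b * v j) := by
      intro i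
      rw [Finset.mul_sum, Finset.sum_mul]
      refine Finset.sum_congr rfl fun a _ => ?_
      rw [Finset.mul_sum, Finset.sum_mul]
      exact Finset.sum_congr rfl fun b _ => by ring
    rw [Finset.sum_congr rfl fun i _ => h1 i, aux_sum_rot3]
    rw [← Finset.sum_neg_distrib]
    refine Finset.sum_congr rfl fun a _ => ?_
    rw [← Finset.sum_neg_distrib]
    refine Finset.sum_congr rfl fun b _ => ?_
    rw [← Finset.sum_mul, hyg a b j, Finset.mul_sum, neg_mul, Finset.sum_mul]
    exact congrArg Neg.neg (Finset.sum_congr rfl fun i _ => by ring)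
  rw [hRT]
  simp only [hcomp]
  simp only [Finset.sum_mul, Finset.mul_sum, mul_add, add_mul, mul_sub, sub_mul,
    Finset.sum_add_distrib, Finset.sum_sub_distrib, sub_neg_eq_add]
  have p1 : (∑ k, ∑ i, ∑ j, y k * (g i j * du k i * v j))
      = ∑ i, ∑ j, ∑ k, g i j * (y k * du k i) * v j := by
    rw [aux_sum_rot3]
    exact Finset.sum_congr rfl fun i _ => Finset.sum_congr rfl fun j _ =>
      Finset.sum_congr rfl fun k _ => by ring
  have p2 : (∑ k, ∑ i, ∑ j, y k * (g i j * u i * dv k j))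
      = ∑ i, ∑ j, ∑ k, g i j * u i * (y k * dv k j) := by
    rw [aux_sum_rot3]
    exact Finset.sum_congr rfl fun i _ => Finset.sum_congr rfl fun j _ =>
      Finset.sum_congr rfl fun k _ => by ring
  have p3 : (∑ k, ∑ p, ∑ i, ∑ j, y k * (N p k * (g i j * eu p i * v j)))
      = ∑ i, ∑ j, ∑ k, ∑ p, g i j * (y k * (N p k * eu p i)) * v j := by
    rw [aux_sum4_eq, aux_sum4_eq]
    exact Fintype.sum_equiv
      ⟨fun x => (x.2.2.1, x.2.2.2, x.1, x.2.1), fun x => (x.2.2.1, x.2.2.2, x.1, x.2.1),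
        fun _ => rfl, fun _ => rfl⟩ _ _ (fun x => by simp only [Equiv.coe_fn_mk]; ring)
  have p4 : (∑ k, ∑ p, ∑ i, ∑ j, y k * (N p k * (g i j * u i * ev p j)))
      = ∑ i, ∑ j, ∑ k, ∑ p, g i j * u i * (y k * (N p k * ev p j)) := by
    rw [aux_sum4_eq, aux_sum4_eq]
    exact Fintype.sum_equiv
      ⟨fun x => (x.2.2.1, x.2.2.2, x.1, x.2.1), fun x => (x.2.2.1, x.2.2.2, x.1, x.2.1),
        fun _ => rfl, fun _ => rfl⟩ _ _ (fun x => by simp only [Equiv.coe_fn_mk]; ring)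
  have p5 : (∑ k, ∑ s, ∑ i, ∑ j, y k * (Y s k * (g i j * eu s i * v j)))
      = ∑ i, ∑ j, ∑ k, ∑ s, g i j * (y k * (Y s k * eu s i)) * v j := by
    rw [aux_sum4_eq, aux_sum4_eq]
    exact Fintype.sum_equiv
      ⟨fun x => (x.2.2.1, x.2.2.2, x.1, x.2.1), fun x => (x.2.2.1, x.2.2.2, x.1, x.2.1),
        fun _ => rfl, fun _ => rfl⟩ _ _ (fun x => by simp only [Equiv.coe_fn_mk]; ring)
  have p6 : (∑ k, ∑ s, ∑ i, ∑ j, y k * (Y s k * (g i j * u i * ev s j)))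
      = ∑ i, ∑ j, ∑ k, ∑ s, g i j * u i * (y k * (Y s k * ev s j)) := by
    rw [aux_sum4_eq, aux_sum4_eq]
    exact Fintype.sum_equiv
      ⟨fun x => (x.2.2.1, x.2.2.2, x.1, x.2.1), fun x => (x.2.2.1, x.2.2.2, x.1, x.2.1),
        fun _ => rfl, fun _ => rfl⟩ _ _ (fun x => by simp only [Equiv.coe_fn_mk]; ring)
  have p7 : (∑ k, ∑ i, ∑ j, ∑ m, y k * (g m j * Γm m i k * u i * v j))
      = ∑ a, ∑ b, ∑ c, ∑ d, g a b * (y c * (Γm a c d * u d)) * v b := by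
    rw [aux_sum4_eq, aux_sum4_eq]
    exact Fintype.sum_equiv
      ⟨fun x => (x.2.2.2, x.2.2.1, x.1, x.2.1), fun x => (x.2.2.1, x.2.2.2, x.2.1, x.1),
        fun _ => rfl, fun _ => rfl⟩ _ _
      (fun x => by simp only [Equiv.coe_fn_mk]; rw [hΓs x.2.2.2 x.2.1 x.1]; ring)
  have p8 : (∑ k, ∑ i, ∑ j, ∑ m, y k * (g m i * Γm m j k * u i * v j))
      = ∑ a, ∑ b, ∑ c, ∑ d, g a b * u a * (y c * (Γm b c d * v d)) := by
    rw [aux_sum4_eq, aux_sum4_eq]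
    exact Fintype.sum_equiv
      ⟨fun x => (x.2.1, x.2.2.2, x.1, x.2.2.1), fun x => (x.2.2.1, x.1, x.2.2.2, x.2.1),
        fun _ => rfl, fun _ => rfl⟩ _ _
      (fun x => by simp only [Equiv.coe_fn_mk]; rw [hgs x.2.2.2 x.2.1, hΓs x.2.2.2 x.2.2.1 x.1]; ring)
  have p9 : (∑ k, ∑ i, ∑ j, ∑ m, y k * (2 * C i m j * N m k * u i * v j))
      = ∑ a, ∑ b, ∑ c, ∑ d, y a * (N b a * (2 * C b c d * u c * v d)) := by
    rw [aux_sum4_eq, aux_sum4_eq]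
    exact Fintype.sum_equiv
      ⟨fun x => (x.1, x.2.2.2, x.2.1, x.2.2.1), fun x => (x.1, x.2.2.1, x.2.2.2, x.2.1),
        fun _ => rfl, fun _ => rfl⟩ _ _
      (fun x => by simp only [Equiv.coe_fn_mk]; rw [hCs x.2.1 x.2.2.2 x.2.2.1]; ring)
  have p10 : (∑ k, ∑ s, ∑ i, ∑ j, y k * (Y s k * (2 * C s i j * u i * v j)))
      = ∑ a, ∑ b, ∑ c, ∑ d, 2 * C b d a * Y d c * (u b * y c * v a) := by
    rw [aux_sum4_eq, aux_sum4_eq]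
    exact Fintype.sum_equiv
      ⟨fun x => (x.2.2.2, x.2.2.1, x.1, x.2.1), fun x => (x.2.2.1, x.2.2.2, x.2.1, x.1),
        fun _ => rfl, fun _ => rfl⟩ _ _
      (fun x => by simp only [Equiv.coe_fn_mk]; rw [hCs x.2.1 x.2.2.1 x.2.2.2]; ring)
  rw [p1, p2, p3, p4, p5, p6, p7, p8, p9, p10]
  ring

end GrandAlgebra

section PdWrappers

variable {n : ℕ} {z : Pt n}

theorem pdx_sum' {ι : Type*} (s : Finset ι) {f : ι → Pt n → ℝ}
    (hf : ∀ i ∈ s, DifferentiableAt ℝ (f i) z) (k : Fin n) :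
    pdx k (fun w => ∑ i ∈ s, f i w) z = ∑ i ∈ s, pdx k (f i) z :=
  aux_pd_sum s hf _

theorem pdy_sum' {ι : Type*} (s : Finset ι) {f : ι → Pt n → ℝ}
    (hf : ∀ i ∈ s, DifferentiableAt ℝ (f i) z) (k : Fin n) :
    pdy k (fun w => ∑ i ∈ s, f i w) z = ∑ i ∈ s, pdy k (f i) z :=
  aux_pd_sum s hf _

theorem pdy_mul' {f g : Pt n → ℝ} (hf : DifferentiableAt ℝ f z)
    (hg : DifferentiableAt ℝ g z) (k : Fin n) :
    pdy k (fun w => f w * g w) z = pdy k f z * g z + f z * pdy k g z :=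
  aux_pd_mul hf hg _

theorem pdx_mul3' {f g h : Pt n → ℝ} (hf : DifferentiableAt ℝ f z)
    (hg : DifferentiableAt ℝ g z) (hh : DifferentiableAt ℝ h z) (k : Fin n) :
    pdx k (fun w => f w * g w * h w) z
      = pdx k f z * g z * h z + f z * pdx k g z * h z + f z * g z * pdx k h z :=
  aux_pd_mul3 hf hg hh _

theorem pdy_mul3' {f g h : Pt n → ℝ} (hf : DifferentiableAt ℝ f z)
    (hg : DifferentiableAt ℝ g z) (hh : DifferentiableAt ℝ h z) (k : Fin n) :
    pdy k (fun w => f w * g w * h w) z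
      = pdy k f z * g z * h z + f z * pdy k g z * h z + f z * g z * pdy k h z :=
  aux_pd_mul3 hf hg hh _

end PdWrappers

/-- **Leibniz rule for the magnetic derivative of the inner product:** on the set
where `F = 1`, with `φ := ⟨U,V⟩`,
`y^k φ_{:k} = ⟨XU,V⟩ + ⟨U,XV⟩ − ⟨(∇_{·U}Y)(y), V⟩`. -/
theorem stmt_16 (n : ℕ) (hn : 1 ≤ n) (W : Set (Pt n)) (hWopen : IsOpen W)
    (hWy : ∀ z ∈ W, z.2 ≠ 0)
    (hWcone : ∀ z ∈ W, ∀ t : ℝ, 0 < t → (z.1, t • z.2) ∈ W)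
    (F : Pt n → ℝ) (hFsmooth : ContDiffOn ℝ (⊤ : ℕ∞) F W)
    (hFpos : ∀ z ∈ W, 0 < F z)
    (hFhom : ∀ z ∈ W, ∀ t : ℝ, 0 < t → F (z.1, t • z.2) = t * F z)
    (ginv : Fin n → Fin n → Pt n → ℝ)
    (hginv : ∀ z ∈ W, ∀ i j, ∑ k, gF F i k z * ginv k j z = if i = j then (1:ℝ) else 0)
    (hginv' : ∀ z ∈ W, ∀ i j, ∑ k, ginv i k z * gF F k j z = if i = j then (1:ℝ) else 0)
    (Γ : Fin n → Fin n → Fin n → Pt n → ℝ)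
    (hΓsmooth : ∀ i j k, ContDiffOn ℝ (⊤ : ℕ∞) (Γ i j k) W)
    (hΓsym : ∀ i j k, ∀ z ∈ W, Γ i j k z = Γ i k j z)
    (hcompat : ∀ z ∈ W, ∀ j l m,
      pdx m (gF F j l) z =
        ∑ k, (gF F k l z * Γ k j m z + gF F k j z * Γ k l m z
          + 2 * CF F j k l z * Nc Γ k m z))
    (Ω : Fin n → Fin n → (Fin n → ℝ) → ℝ)
    (hΩsmooth : ∀ j k, ContDiffOn ℝ (⊤ : ℕ∞) (fun z : Pt n => Ω j k z.1) W)
    (hΩanti : ∀ z ∈ W, ∀ j k, Ω j k z.1 = -Ω k j z.1)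
    (U V : Fin n → Pt n → ℝ)
    (hU : ∀ i, ContDiffOn ℝ (⊤ : ℕ∞) (U i) W)
    (hV : ∀ i, ContDiffOn ℝ (⊤ : ℕ∞) (V i) W) :
    ∀ z ∈ W, F z = 1 →
      (∑ k, z.2 k * dmS F Γ Ω ginv k (iprod F U V) z)
        = iprod F (XVec F Γ Ω ginv U) V z + iprod F U (XVec F Γ Ω ginv V) z
          - iprod F
              (fun i w => ∑ j, ∑ k, pdy j (Yl Ω ginv i k) w * U j w * w.2 k) V z := by
  intro z hz hF1
  classical
  have hWz : W ∈ nhds z := hWopen.mem_nhds hz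
  have hf2 : ContDiffOn ℝ (⊤:ℕ∞) (fun w => F w ^ 2) W := hFsmooth.pow 2
  have hgsm : ∀ i j, ContDiffOn ℝ (⊤:ℕ∞) (gF F i j) W := by
    intro i j
    exact contDiffOn_const.mul
      (aux_smOn_pd hWopen (aux_smOn_pd hWopen hf2 ((0 : Fin n → ℝ), Pi.single j 1))
        ((0 : Fin n → ℝ), Pi.single i 1))
  have hdiff : ∀ {f : Pt n → ℝ}, ContDiffOn ℝ (⊤:ℕ∞) f W → DifferentiableAt ℝ f z := by
    intro f hf
    exact (hf.contDiffAt hWz).differentiableAt (by norm_cast)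
  have hgd : ∀ i j, DifferentiableAt ℝ (gF F i j) z := fun i j => hdiff (hgsm i j)
  have hUd : ∀ i, DifferentiableAt ℝ (U i) z := fun i => hdiff (hU i)
  have hVd : ∀ i, DifferentiableAt ℝ (V i) z := fun i => hdiff (hV i)
  have hΩd : ∀ b l, DifferentiableAt ℝ (fun w : Pt n => Ω b l w.1) z :=
    fun b l => hdiff (hΩsmooth b l)
  obtain ⟨Gi, hGism, hGieq⟩ := aux_ginv_eq_cramer hWopen hgsm hginv
  have hYd : ∀ i k, DifferentiableAt ℝ (Yl Ω ginv i k) z := by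
    intro i k
    have h1 : ∀ s : Fin n, DifferentiableAt ℝ (fun w => Ω k s w.1 * ginv i s w) z := by
      intro s
      have hev : ginv i s =ᶠ[nhds z] Gi i s :=
        Filter.eventuallyEq_of_mem hWz (fun w hw => hGieq w hw i s)
      exact (hΩd k s).mul (hev.differentiableAt_iff.mpr (hdiff (hGism i s)))
    exact DifferentiableAt.fun_sum (fun s _ => h1 s)
  -- ∂g/∂y = 2C
  have hdyg : ∀ w ∈ W, ∀ p i j, pdy p (gF F i j) w = 2 * CF F p i j w := by
    intro w hw p i j
    have hd : DifferentiableAt ℝ (pdy i (pdy j (fun x => F x ^ 2))) w :=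
      ((aux_smOn_pd hWopen (aux_smOn_pd hWopen hf2 ((0 : Fin n → ℝ), Pi.single j 1))
        ((0 : Fin n → ℝ), Pi.single i 1)).contDiffAt (hWopen.mem_nhds hw)).differentiableAt
        (by norm_cast)
    have h1 : pdy p (gF F i j) w
        = (1/2 : ℝ) * pdy p (pdy i (pdy j (fun x => F x ^ 2))) w := by
      show fderiv ℝ (fun u => (1/2 : ℝ) * pdy i (pdy j (fun x => F x ^ 2)) u) w
          ((0 : Fin n → ℝ), Pi.single p 1) = _
      rw [fderiv_const_mul hd (1/2 : ℝ)]
      simp only [ContinuousLinearMap.coe_smul', Pi.smul_apply, smul_eq_mul]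
      rfl
    rw [h1]
    show _ = 2 * ((1/4 : ℝ) * pdy p (pdy i (pdy j (fun x => F x ^ 2))) w)
    ring
  -- symmetry of g
  have hgsymW : ∀ w ∈ W, ∀ i j, gF F i j w = gF F j i w := by
    intro w hw i j
    have hf2w : ContDiffAt ℝ (⊤:ℕ∞) (fun x => F x ^ 2) w := hf2.contDiffAt (hWopen.mem_nhds hw)
    exact congrArg (fun t => (1/2:ℝ) * t)
      (aux_pd_pd_comm hf2w ((0 : Fin n → ℝ), Pi.single i 1) ((0 : Fin n → ℝ), Pi.single j 1))
  -- symmetry of C in the first two indices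
  have hCsymW : ∀ w ∈ W, ∀ i j k, CF F i j k w = CF F j i k w := by
    intro w hw i j k
    have hjk : ContDiffAt ℝ (⊤:ℕ∞) (pdy k (fun x => F x ^ 2)) w :=
      (aux_smOn_pd hWopen hf2 ((0 : Fin n → ℝ), Pi.single k 1)).contDiffAt (hWopen.mem_nhds hw)
    exact congrArg (fun t => (1/4:ℝ) * t)
      (aux_pd_pd_comm hjk ((0 : Fin n → ℝ), Pi.single i 1) ((0 : Fin n → ℝ), Pi.single j 1))
  -- g_{il} (∂Y/∂y) contraction
  have hyg : ∀ a b l, (∑ i, gF F i l z * pdy a (Yl Ω ginv i b) z)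
      = -(2 * ∑ i, CF F a i l z * Yl Ω ginv i b z) := by
    intro a b l
    have hΦW : ∀ w ∈ W, (∑ i, gF F i l w * Yl Ω ginv i b w) = Ω b l w.1 := by
      intro w hw
      have step : ∀ i : Fin n, gF F i l w * Yl Ω ginv i b w
          = ∑ s, Ω b s w.1 * (gF F l i w * ginv i s w) := by
        intro i
        show gF F i l w * (∑ s, Ω b s w.1 * ginv i s w) = _
        rw [Finset.mul_sum]
        exact Finset.sum_congr rfl fun s _ => by rw [hgsymW w hw i l]; ring
      calc (∑ i, gF F i l w * Yl Ω ginv i b w)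
          = ∑ i, ∑ s, Ω b s w.1 * (gF F l i w * ginv i s w) :=
            Finset.sum_congr rfl fun i _ => step i
        _ = ∑ s, ∑ i, Ω b s w.1 * (gF F l i w * ginv i s w) := Finset.sum_comm
        _ = ∑ s, Ω b s w.1 * ∑ i, gF F l i w * ginv i s w :=
            Finset.sum_congr rfl fun s _ => by rw [Finset.mul_sum]
        _ = ∑ s, Ω b s w.1 * (if l = s then (1:ℝ) else 0) :=
            Finset.sum_congr rfl fun s _ => by rw [hginv w hw l s]
        _ = Ω b l w.1 := by simp
    have hΦd0 : pdy a (fun w => ∑ i, gF F i l w * Yl Ω ginv i b w) z = 0 := by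
      have hev : (fun w => ∑ i, gF F i l w * Yl Ω ginv i b w)
          =ᶠ[nhds z] (fun w : Pt n => Ω b l w.1) :=
        Filter.eventuallyEq_of_mem hWz hΦW
      show fderiv ℝ (fun w => ∑ i, gF F i l w * Yl Ω ginv i b w) z
        ((0 : Fin n → ℝ), Pi.single a 1) = 0
      rw [hev.fderiv_eq]
      exact aux_pd_fst_zero (hΩd b l) (fun w => rfl) _
    have hexp : pdy a (fun w => ∑ i, gF F i l w * Yl Ω ginv i b w) z
        = ∑ i, (2 * CF F a i l z * Yl Ω ginv i b z
            + gF F i l z * pdy a (Yl Ω ginv i b) z) := by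
      rw [pdy_sum' _ (fun i _ => (hgd i l).fun_mul (hYd i b))]
      refine Finset.sum_congr rfl fun i _ => ?_
      rw [pdy_mul' (hgd i l) (hYd i b), hdyg z hz a i l]
    have h0 : (∑ i, (2 * CF F a i l z * Yl Ω ginv i b z
        + gF F i l z * pdy a (Yl Ω ginv i b) z)) = 0 := by
      rw [← hexp, hΦd0]
    rw [Finset.sum_add_distrib] at h0
    have h2 : (∑ i, 2 * CF F a i l z * Yl Ω ginv i b z)
        = 2 * ∑ i, CF F a i l z * Yl Ω ginv i b z := by
      rw [Finset.mul_sum]; exact Finset.sum_congr rfl fun i _ => by ring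
    linarith [h0, h2]
  -- derivative expansions of iprod
  have hiprod_diff : ∀ i, DifferentiableAt ℝ (fun w => ∑ j, gF F i j w * U i w * V j w) z :=
    fun i => DifferentiableAt.fun_sum (fun j _ => ((hgd i j).fun_mul (hUd i)).fun_mul (hVd j))
  have hdφx : ∀ k, pdx k (iprod F U V) z
      = ∑ i, ∑ j, (pdx k (gF F i j) z * U i z * V j z + gF F i j z * pdx k (U i) z * V j z
          + gF F i j z * U i z * pdx k (V j) z) := by
    intro k
    calc pdx k (iprod F U V) z
        = ∑ i, pdx k (fun w => ∑ j, gF F i j w * U i w * V j w) z :=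
          pdx_sum' Finset.univ (fun i _ => hiprod_diff i) k
      _ = _ := by
          refine Finset.sum_congr rfl fun i _ => ?_
          rw [pdx_sum' _ (fun j _ => ((hgd i j).fun_mul (hUd i)).fun_mul (hVd j))]
          exact Finset.sum_congr rfl fun j _ => pdx_mul3' (hgd i j) (hUd i) (hVd j) k
  have hdφy : ∀ p, pdy p (iprod F U V) z
      = ∑ i, ∑ j, (2 * CF F p i j z * U i z * V j z + gF F i j z * pdy p (U i) z * V j z
          + gF F i j z * U i z * pdy p (V j) z) := by
    intro p
    calc pdy p (iprod F U V) z
        = ∑ i, pdy p (fun w => ∑ j, gF F i j w * U i w * V j w) z :=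
          pdy_sum' Finset.univ (fun i _ => hiprod_diff i) p
      _ = _ := by
          refine Finset.sum_congr rfl fun i _ => ?_
          rw [pdy_sum' _ (fun j _ => ((hgd i j).fun_mul (hUd i)).fun_mul (hVd j))]
          refine Finset.sum_congr rfl fun j _ => ?_
          rw [pdy_mul3' (hgd i j) (hUd i) (hVd j) p, hdyg z hz p i j]
  -- unfold the statement and conclude by the algebraic identity
  simp only [dmS, dhS, iprod, XVec, dmVec, hF1, one_mul]
  simp only [hdφx, hdφy]
  exact aux_grand (fun i j => gF F i j z) (fun k i => pdx k (U i) z) (fun k j => pdx k (V j) z)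
    (fun p i => pdy p (U i) z) (fun p j => pdy p (V j) z) (fun p k => Nc Γ p k z)
    (fun s k => Yl Ω ginv s k z) (fun k i j => pdx k (gF F i j) z)
    (fun a i b => pdy a (Yl Ω ginv i b) z) (fun a b c => CF F a b c z)
    (fun i k p => Γ i k p z) (fun i => U i z) (fun j => V j z) z.2
    (fun i j => hgsymW z hz i j) (fun a b c => hCsymW z hz a b c)
    (fun i a b => hΓsym i a b z hz)
    (fun k i j => hcompat z hz i j k) hyg


end
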